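/- (ACI average coverage bound.) Let α ∈ (0,1), γ > 0, and let err_t ∈ {0,1} for t = 1,2,.... Define α_{t+1} = α_t + γ(α - err_t) with initial value α_1 ∈ [0,1]. Suppose the rule satisfies: err_t = 1 whenever α_t < 0 and err_t = 0 whenever α_t > 1 (equivalently, assume α_t ∈ [-γ, 1+γ] for all t, which follows from the prediction rule's miscoverage structure). Then for every T ≥ 1, | (1/T) Σ_{t=1}^T err_t - α | ≤ (max(α_1, 1-α_1) + γ) / (T γ). -/
import Mathlib


theorem stmt6 (α γ : ℝ) (hα : α ∈ Set.Ioo (0 : ℝ) 1) (hγ : 0 < γ)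
    (a : ℕ → ℝ) (err : ℕ → ℝ)
    (herr : ∀ t, 1 ≤ t → err t = 0 ∨ err t = 1)
    (ha1 : a 1 ∈ Set.Icc (0 : ℝ) 1)
    (hrec : ∀ t, 1 ≤ t → a (t + 1) = a t + γ * (α - err t))
    (hbound : ∀ t, 1 ≤ t → a t ∈ Set.Icc (-γ) (1 + γ)) :
    ∀ T : ℕ, 1 ≤ T →
      |(∑ t ∈ Finset.Icc 1 T, err t) / T - α| ≤ (max (a 1) (1 - a 1) + γ) / (T * γ) := by
  have key : ∀ T : ℕ, a (T + 1) = a 1 + γ * ((T : ℝ) * α - ∑ t ∈ Finset.Icc 1 T, err t) := by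
    intro T
    induction T with
    | zero => simp
    | succ n ih =>
      have h1 : (1 : ℕ) ≤ n + 1 := Nat.le_add_left 1 n
      rw [hrec (n + 1) h1, ih, Finset.sum_Icc_succ_top h1]
      push_cast
      ring
  intro T hT
  have hTpos : (0 : ℝ) < T := by exact_mod_cast hT
  have hab := hbound (T + 1) (by omega)
  have heq : (∑ t ∈ Finset.Icc 1 T, err t) / T - α = (a 1 - a (T + 1)) / (T * γ) := by
    have := key T
    field_simp
    nlinarith [key T]
  rw [heq, abs_div, abs_of_pos (by positivity : (0:ℝ) < (T:ℝ) * γ)]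
  apply div_le_div_of_nonneg_right ?_ (by positivity)
  rw [abs_sub_le_iff]
  constructor
  · have : a 1 ≤ max (a 1) (1 - a 1) := le_max_left _ _
    linarith [hab.1]
  · have : 1 - a 1 ≤ max (a 1) (1 - a 1) := le_max_right _ _
    linarith [hab.2]
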